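/- arXiv:1912.12212 — 3 statements merged into one kernel-verified Lean document; each statement's English description precedes it below -/
import Mathlib

section
/- Let A, B, M be n×n complex matrices and let a, b be complex scalars with a·b ≠ 1. If A^n = a·I and B^n = b·I (i.e., A is a-potent and B is b-potent), then M = (1/(1 − a·b)) · Σ_{i=0}^{n−1} A^i · Δ_{A,B}[M] · B^i. -/
/-- The Stein displacement operator `Δ_{A,B}[M] = M - A·M·B`. -/
noncomputable def steinDisplacement {n : ℕ} (A B M : Matrix (Fin n) (Fin n) ℂ) :
    Matrix (Fin n) (Fin n) ℂ := M - A * M * B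

/-- If `A` is `a`-potent (`A^n = a·I`), `B` is `b`-potent (`B^n = b·I`) and `a·b ≠ 1`, then
`M = (1/(1 − a·b)) · Σ_{i=0}^{n−1} A^i · Δ_{A,B}[M] · B^i`. -/
theorem stein_inversion (n : ℕ) (A B M : Matrix (Fin n) (Fin n) ℂ) (a b : ℂ)
    (hab : a * b ≠ 1)
    (hA : A ^ n = a • (1 : Matrix (Fin n) (Fin n) ℂ))
    (hB : B ^ n = b • (1 : Matrix (Fin n) (Fin n) ℂ)) :
    M = (1 / (1 - a * b)) •
      ∑ i ∈ Finset.range n, A ^ i * steinDisplacement A B M * B ^ i := by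
  have key : ∑ i ∈ Finset.range n, A ^ i * steinDisplacement A B M * B ^ i
      = M - A ^ n * M * B ^ n := by
    have h := Finset.sum_range_sub' (f := fun i => A ^ i * M * B ^ i) n
    simp only [pow_zero, one_mul, mul_one] at h
    rw [← h]
    apply Finset.sum_congr rfl
    intro i _
    rw [pow_succ A i, pow_succ' B i, steinDisplacement]
    simp only [Matrix.mul_sub, Matrix.sub_mul, mul_assoc]
  rw [key, hA, hB]
  have hne : (1 - a * b) ≠ 0 := sub_ne_zero.mpr (Ne.symm hab)
  have : M - a • (1 : Matrix (Fin n) (Fin n) ℂ) * M * b • 1 = (1 - a * b) • M := by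
    simp [Matrix.smul_mul, Matrix.mul_smul, sub_smul, smul_smul, mul_comm]
  rw [this, smul_smul, one_div, inv_mul_cancel₀ hne, one_smul]
end

section
/- Let M ∈ ℂ^{n×n}, let e, f be real scalars with e·f ≠ 1, and suppose the Stein displacement of M factors as Δ_{Z_e,Z_f}[M] = G·Hᵀ where G = [g_1 … g_r] and H = [h_1 … h_r] are n×r complex matrices with columns g_j and h_j. Then M = (1/(1 − e·f)) · Σ_{j=1}^{r} Z_e(g_j) · (Z_f(J·h_j))ᵀ · J. -/
open Matrix

/-- The `n × n` unit `f`-circulant matrix `Z_f`: entries `(Z_f)_{i,k} = 1` if `i = k+1`,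
`(Z_f)_{0,n−1} = f`, and `0` otherwise. -/
noncomputable def Zf (n : ℕ) (f : ℝ) : Matrix (Fin n) (Fin n) ℂ :=
  Matrix.of fun i k =>
    if (i : ℕ) = (k : ℕ) + 1 then 1
    else if (i : ℕ) = 0 ∧ (k : ℕ) = n - 1 then (f : ℂ)
    else 0

/-- The `n × n` reversal matrix `J`: entries `J_{i,k} = 1` if `i + k = n − 1`, else `0`. -/
noncomputable def Jrev (n : ℕ) : Matrix (Fin n) (Fin n) ℂ :=
  Matrix.of fun i k => if (i : ℕ) + (k : ℕ) = n - 1 then 1 else 0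

/-- The `f`-circulant matrix `Z_f(v)` generated by a vector `v ∈ ℂ^n`:
`(Z_f(v))_{i,k} = v_{i−k}` if `i ≥ k`, and `(Z_f(v))_{i,k} = f · v_{n+i−k}` if `i < k`. -/
noncomputable def ZfVec (n : ℕ) (f : ℝ) (v : Fin n → ℂ) : Matrix (Fin n) (Fin n) ℂ :=
  Matrix.of fun i k =>
    (if (k : ℕ) ≤ (i : ℕ) then 1 else (f : ℂ)) *
      v ⟨((i : ℕ) + n - (k : ℕ)) % n, Nat.mod_lt _ i.pos⟩

namespace SteinAux

variable {n : ℕ}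

def rev (i : Fin n) : Fin n := ⟨n - 1 - (i : ℕ), by have := i.2; omega⟩

lemma rev_rev (i : Fin n) : rev (rev i) = i := by
  have := i.2; simp only [rev, Fin.ext_iff]; omega

lemma Jrev_apply (i k : Fin n) :
    Jrev n i k = if k = rev i then 1 else 0 := by
  have hi := i.2; have hk := k.2
  simp only [Jrev, of_apply, rev, Fin.ext_iff]
  split_ifs <;> first | rfl | omega

lemma mul_Jrev_apply (X : Matrix (Fin n) (Fin n) ℂ) (i l : Fin n) :
    (X * Jrev n) i l = X i (rev l) := by
  rw [mul_apply]
  have : ∀ m : Fin n, X i m * Jrev n m l = if m = rev l then X i (rev l) else 0 := by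
    intro m
    rw [Jrev_apply]
    by_cases h : m = rev l
    · subst h; rw [if_pos rfl, if_pos (by rw [rev_rev]), mul_one]
    · rw [if_neg h, if_neg, mul_zero]
      intro hc
      exact h (by rw [hc, rev_rev])
  rw [Finset.sum_congr rfl (fun m _ => this m), Finset.sum_ite_eq' _ (rev l)]
  simp

lemma Jrev_mulVec (w : Fin n → ℂ) (l : Fin n) :
    (Jrev n *ᵥ w) l = w (rev l) := by
  simp only [mulVec, dotProduct]
  have : ∀ m : Fin n, Jrev n l m * w m = if m = rev l then w (rev l) else 0 := by
    intro m
    rw [Jrev_apply]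
    by_cases h : m = rev l
    · subst h; simp
    · simp [h]
  rw [Finset.sum_congr rfl (fun m _ => this m), Finset.sum_ite_eq' _ (rev l)]
  simp

lemma Jrev_mul_Jrev : Jrev n * Jrev n = 1 := by
  ext i l
  rw [mul_Jrev_apply, Jrev_apply, one_apply]
  by_cases h : l = i
  · subst h; simp
  · rw [if_neg, if_neg (fun hc : i = l => h hc.symm)]
    intro hc
    exact h (by rw [← rev_rev (n := n) l, hc, rev_rev])

lemma Jrev_Zf_Jrev (f : ℝ) : Jrev n * Zf n f * Jrev n = (Zf n f)ᵀ := by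
  ext i l
  rw [mul_Jrev_apply, transpose_apply]
  rw [show (Jrev n * Zf n f) i (rev l) = (Zf n f) (rev i) (rev l) from ?_]
  · have hi := i.2; have hl := l.2
    simp only [Zf, of_apply, rev]
    split_ifs <;> first | rfl | omega
  · rw [mul_apply]
    have : ∀ m : Fin n, Jrev n i m * Zf n f m (rev l)
        = if m = rev i then Zf n f (rev i) (rev l) else 0 := by
      intro m
      rw [Jrev_apply]
      by_cases h : m = rev i
      · subst h; simp
      · simp [h]
    rw [Finset.sum_congr rfl (fun m _ => this m), Finset.sum_ite_eq' _ (rev i)]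
    simp

end SteinAux

namespace SteinAux

lemma Zf_mulVec (hn : 0 < n) (f : ℝ) (v : Fin n → ℂ) (i : Fin n) :
    (Zf n f *ᵥ v) i =
      if (i : ℕ) = 0 then (f : ℂ) * v ⟨n - 1, by omega⟩
      else v ⟨(i : ℕ) - 1, by have := i.2; omega⟩ := by
  have hi := i.2
  simp only [mulVec, dotProduct]
  by_cases h0 : (i : ℕ) = 0
  · rw [if_pos h0]
    have key : ∀ k : Fin n, Zf n f i k * v k
        = if k = (⟨n - 1, by omega⟩ : Fin n) then (f : ℂ) * v ⟨n - 1, by omega⟩ else 0 := by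
      intro k
      have hk := k.2
      simp only [Zf, of_apply]
      by_cases h : (k : ℕ) = n - 1
      · rw [if_neg (by omega), if_pos ⟨h0, h⟩, if_pos (Fin.ext h)]
        rw [show k = (⟨n - 1, by omega⟩ : Fin n) from Fin.ext h]
      · rw [if_neg (by omega), if_neg (fun hc => h hc.2),
          if_neg (fun hc => h (by rw [hc])), zero_mul]
    rw [Finset.sum_congr rfl (fun k _ => key k), Finset.sum_ite_eq' _ _]
    simp
  · rw [if_neg h0]
    have key : ∀ k : Fin n, Zf n f i k * v k
        = if k = (⟨(i : ℕ) - 1, by omega⟩ : Fin n) then v ⟨(i : ℕ) - 1, by omega⟩ else 0 := by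
      intro k
      have hk := k.2
      simp only [Zf, of_apply]
      by_cases h : (k : ℕ) = (i : ℕ) - 1
      · rw [if_pos (by omega), if_pos (Fin.ext h), one_mul]
        rw [show k = (⟨(i : ℕ) - 1, by omega⟩ : Fin n) from Fin.ext h]
      · rw [if_neg (by omega), if_neg (fun hc => h0 hc.1),
          if_neg (fun hc => h (by rw [hc])), zero_mul]
    rw [Finset.sum_congr rfl (fun k _ => key k), Finset.sum_ite_eq' _ _]
    simp

lemma Zf_pow_mulVec (hn : 0 < n) (f : ℝ) (v : Fin n → ℂ) :
    ∀ k, k ≤ n → ∀ i : Fin n,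
      ((Zf n f) ^ k *ᵥ v) i =
        (if k ≤ (i : ℕ) then 1 else (f : ℂ)) * v ⟨((i : ℕ) + n - k) % n, Nat.mod_lt _ hn⟩ := by
  intro k
  induction k with
  | zero =>
      intro _ i
      have hi := i.2
      rw [pow_zero, one_mulVec, if_pos (Nat.zero_le _), one_mul]
      congr 1
      refine Fin.ext ?_
      simp only [Fin.val_mk]
      rw [Nat.sub_zero, Nat.add_mod_right, Nat.mod_eq_of_lt hi]
  | succ k ih =>
      intro hk i
      have hi := i.2
      rw [pow_succ', ← mulVec_mulVec, Zf_mulVec hn]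
      by_cases h0 : (i : ℕ) = 0
      · rw [if_pos h0, ih (by omega)]
        simp only [Fin.val_mk]
        rw [if_pos (show k ≤ n - 1 by omega), one_mul,
          if_neg (show ¬ k + 1 ≤ (i : ℕ) by omega)]
        congr 2
        refine Fin.ext ?_
        simp only [Fin.val_mk]
        rw [show n - 1 + n - k = (n - 1 - k) + n from by omega, Nat.add_mod_right,
          Nat.mod_eq_of_lt (by omega), Nat.mod_eq_of_lt (by omega)]
        omega
      · rw [if_neg h0, ih (by omega)]
        simp only [Fin.val_mk]
        congr 1
        · by_cases hc : k + 1 ≤ (i : ℕ)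
          · rw [if_pos (by omega), if_pos hc]
          · rw [if_neg (by omega), if_neg hc]
        · congr 1
          refine Fin.ext ?_
          simp only [Fin.val_mk]
          congr 1
          omega

lemma ZfVec_apply (f : ℝ) (v : Fin n → ℂ) (i k : Fin n) :
    ZfVec n f v i k = ((Zf n f) ^ (k : ℕ) *ᵥ v) i := by
  have hk := k.2
  rw [Zf_pow_mulVec i.pos f v k (le_of_lt hk)]
  rfl

lemma Zf_pow_n (hn : 0 < n) (f : ℝ) : (Zf n f) ^ n = (f : ℂ) • 1 := by
  ext i k
  have h := Zf_pow_mulVec hn f (fun q => if q = k then (1 : ℂ) else 0) n le_rfl i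
  have hi := i.2
  have hL : ((Zf n f) ^ n *ᵥ fun q => if q = k then (1 : ℂ) else 0) i = ((Zf n f) ^ n) i k := by
    simp only [mulVec, dotProduct, mul_ite, mul_one, mul_zero]
    rw [Finset.sum_ite_eq' _ _]
    simp
  rw [hL] at h
  rw [h, if_neg (by omega)]
  have hidx : (⟨((i : ℕ) + n - n) % n, Nat.mod_lt _ hn⟩ : Fin n) = i := by
    refine Fin.ext ?_
    simp only [Fin.val_mk]
    rw [Nat.add_sub_cancel, Nat.mod_eq_of_lt hi]
  rw [hidx]
  simp only [Matrix.smul_apply, one_apply, smul_eq_mul]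

end SteinAux

namespace SteinAux

lemma mul_vecMulVec (A : Matrix (Fin n) (Fin n) ℂ) (u w : Fin n → ℂ) :
    A * vecMulVec u w = vecMulVec (A *ᵥ u) w := by
  ext i l
  simp [mul_apply, vecMulVec_apply, mulVec, dotProduct, Finset.sum_mul, mul_assoc]

lemma vecMulVec_mul (B : Matrix (Fin n) (Fin n) ℂ) (u w : Fin n → ℂ) :
    vecMulVec u w * B = vecMulVec u (w ᵥ* B) := by
  ext i l
  simp [mul_apply, vecMulVec_apply, vecMul, dotProduct, Finset.mul_sum, mul_assoc]

lemma GH_decomp {r : ℕ} (G H : Matrix (Fin n) (Fin r) ℂ) :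
    G * Hᵀ = ∑ j : Fin r, vecMulVec (fun i => G i j) (fun i => H i j) := by
  ext i q
  simp [mul_apply, vecMulVec_apply, transpose_apply, Matrix.sum_apply]

lemma Jrev_pow_conj (f : ℝ) (k : ℕ) :
    Jrev n * (Zf n f) ^ k * Jrev n = ((Zf n f)ᵀ) ^ k := by
  induction k with
  | zero => rw [pow_zero, pow_zero, Matrix.mul_one, Jrev_mul_Jrev]
  | succ k ih =>
      have h2 : ((Zf n f)ᵀ) ^ (k + 1)
          = (Jrev n * (Zf n f) ^ k * Jrev n) * (Jrev n * Zf n f * Jrev n) := by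
        rw [pow_succ, ih, Jrev_Zf_Jrev]
      rw [h2, pow_succ]
      simp only [Matrix.mul_assoc]
      rw [← Matrix.mul_assoc (Jrev n) (Jrev n), Jrev_mul_Jrev, Matrix.one_mul]

end SteinAux


set_option maxHeartbeats 1000000 in
/-- Stein-type displacement inversion: if Δ_{Z_e,Z_f}[M] = G·Hᵀ with e·f ≠ 1, then
M = (1/(1 − e·f)) · Σ_{j=1}^{r} Z_e(g_j) · (Z_f(J·h_j))ᵀ · J. -/
theorem stein_rank_decomposition (n r : ℕ) (M : Matrix (Fin n) (Fin n) ℂ) (e f : ℝ)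
    (hef : e * f ≠ 1) (G H : Matrix (Fin n) (Fin r) ℂ)
    (hM : M - Zf n e * M * Zf n f = G * Hᵀ) :
    M = (1 / (1 - (e : ℂ) * (f : ℂ))) •
      ∑ j : Fin r,
        ZfVec n e (fun i => G i j) *
          (ZfVec n f ((Jrev n).mulVec fun i => H i j))ᵀ * Jrev n := by
  rcases Nat.eq_zero_or_pos n with hn | hn
  · subst hn; ext i j; exact i.elim0
  have hA : (Zf n e) ^ n = (e : ℂ) • 1 := SteinAux.Zf_pow_n hn e
  have hB : (Zf n f) ^ n = (f : ℂ) • 1 := SteinAux.Zf_pow_n hn f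
  have step : ∀ k : ℕ,
      (Zf n e) ^ k * M * (Zf n f) ^ k - (Zf n e) ^ (k + 1) * M * (Zf n f) ^ (k + 1)
        = (Zf n e) ^ k * (G * Hᵀ) * (Zf n f) ^ k := by
    intro k
    rw [← hM, mul_sub, sub_mul, pow_succ, pow_succ']
    simp only [Matrix.mul_assoc]
  have tel : ∑ k ∈ Finset.range n, (Zf n e) ^ k * (G * Hᵀ) * (Zf n f) ^ k
      = M - ((e : ℂ) * (f : ℂ)) • M := by
    calc ∑ k ∈ Finset.range n, (Zf n e) ^ k * (G * Hᵀ) * (Zf n f) ^ k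
        = ∑ k ∈ Finset.range n,
            ((Zf n e) ^ k * M * (Zf n f) ^ k
              - (Zf n e) ^ (k + 1) * M * (Zf n f) ^ (k + 1)) :=
          Finset.sum_congr rfl (fun k _ => (step k).symm)
      _ = (Zf n e) ^ 0 * M * (Zf n f) ^ 0 - (Zf n e) ^ n * M * (Zf n f) ^ n :=
          Finset.sum_range_sub' _ n
      _ = M - ((e : ℂ) * (f : ℂ)) • M := by
          rw [pow_zero, pow_zero, Matrix.one_mul, Matrix.mul_one, hA, hB]
          rw [Matrix.smul_mul, Matrix.mul_smul, Matrix.one_mul, Matrix.mul_one,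
            smul_smul, mul_comm]
  have lhs_eq : ∀ k : ℕ, (Zf n e) ^ k * (G * Hᵀ) * (Zf n f) ^ k
      = ∑ j : Fin r, vecMulVec ((Zf n e) ^ k *ᵥ fun i => G i j)
          (((Zf n f)ᵀ) ^ k *ᵥ fun i => H i j) := by
    intro k
    rw [SteinAux.GH_decomp, Finset.mul_sum, Finset.sum_mul]
    refine Finset.sum_congr rfl (fun j _ => ?_)
    rw [SteinAux.mul_vecMulVec, SteinAux.vecMulVec_mul,
      ← Matrix.transpose_pow, Matrix.mulVec_transpose]
  have rhs_eq : ∀ j : Fin r,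
      ZfVec n e (fun i => G i j) * (ZfVec n f ((Jrev n) *ᵥ fun i => H i j))ᵀ * Jrev n
        = ∑ k ∈ Finset.range n, vecMulVec ((Zf n e) ^ k *ᵥ fun i => G i j)
            (((Zf n f)ᵀ) ^ k *ᵥ fun i => H i j) := by
    intro j
    ext i l
    rw [SteinAux.mul_Jrev_apply, mul_apply, Matrix.sum_apply,
      ← Fin.sum_univ_eq_sum_range (fun k => (vecMulVec ((Zf n e) ^ k *ᵥ fun i => G i j)
            (((Zf n f)ᵀ) ^ k *ᵥ fun i => H i j)) i l) n]
    refine Finset.sum_congr rfl (fun k _ => ?_)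
    rw [transpose_apply, SteinAux.ZfVec_apply, SteinAux.ZfVec_apply, vecMulVec_apply]
    congr 1
    rw [← SteinAux.Jrev_pow_conj, ← Matrix.mulVec_mulVec, ← Matrix.mulVec_mulVec,
      SteinAux.Jrev_mulVec]
  have key : ∑ k ∈ Finset.range n, (Zf n e) ^ k * (G * Hᵀ) * (Zf n f) ^ k
      = ∑ j : Fin r, ZfVec n e (fun i => G i j) *
          (ZfVec n f ((Jrev n) *ᵥ fun i => H i j))ᵀ * Jrev n := by
    rw [Finset.sum_congr rfl (fun k _ => lhs_eq k), Finset.sum_comm]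
    exact Finset.sum_congr rfl (fun j _ => (rhs_eq j).symm)
  have h1 : (1 - (e : ℂ) * (f : ℂ)) ≠ 0 := by
    intro hc
    apply hef
    have h2 : (1 : ℂ) = (e : ℂ) * (f : ℂ) := sub_eq_zero.mp hc
    have h3 : ((e * f : ℝ) : ℂ) = ((1 : ℝ) : ℂ) := by push_cast; exact h2.symm
    exact_mod_cast h3
  calc M = (1 / (1 - (e : ℂ) * (f : ℂ))) • ((1 - (e : ℂ) * (f : ℂ)) • M) := by
        rw [smul_smul, one_div, inv_mul_cancel₀ h1, one_smul]
    _ = (1 / (1 - (e : ℂ) * (f : ℂ))) • (M - ((e : ℂ) * (f : ℂ)) • M) := by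
        rw [sub_smul, one_smul]
    _ = _ := by rw [← tel, key]
end

section
/- Let M ∈ ℂ^{n×n}, let e, f be real scalars with e ≠ f and e ≠ 0, and suppose the Sylvester displacement of M factors as ∇_{Z_e,Z_f}[M] = G·Hᵀ where G = [g_1 … g_r] and H = [h_1 … h_r] are n×r complex matrices with columns g_j and h_j. Then M = (1/(e − f)) · Σ_{j=1}^{r} Z_e(g_j) · Z_f(J·h_j). -/
open Matrix

lemma Zf_mul_apply {n : ℕ} (hn : 0 < n) (f : ℝ) (A : Matrix (Fin n) (Fin n) ℂ)
    (i k : Fin n) :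
    (Zf n f * A) i k =
      if (i : ℕ) = 0 then (f : ℂ) * A ⟨n - 1, by omega⟩ k
      else A ⟨(i : ℕ) - 1, by omega⟩ k := by
  rw [Matrix.mul_apply]
  have hi := i.isLt
  split_ifs with h
  · rw [Finset.sum_eq_single (⟨n - 1, by omega⟩ : Fin n)]
    · have e : ((⟨n - 1, by omega⟩ : Fin n) : ℕ) = n - 1 := rfl
      simp only [Zf, Matrix.of_apply, e, and_true, true_and]
      split_ifs <;> first | ring1 | (exfalso; omega)
    · intro j _ hj
      have hj' : (j : ℕ) ≠ n - 1 := fun hc => hj (Fin.ext hc)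
      simp only [Zf, Matrix.of_apply, and_true, true_and]
      split_ifs <;> first | ring1 | (exfalso; omega)
    · simp
  · rw [Finset.sum_eq_single (⟨(i : ℕ) - 1, by omega⟩ : Fin n)]
    · have e : ((⟨(i : ℕ) - 1, by omega⟩ : Fin n) : ℕ) = (i : ℕ) - 1 := rfl
      simp only [Zf, Matrix.of_apply, e, and_true, true_and]
      split_ifs <;> first | ring1 | (exfalso; omega)
    · intro j _ hj
      have hj' : (j : ℕ) ≠ (i : ℕ) - 1 := fun hc => hj (Fin.ext hc)
      simp only [Zf, Matrix.of_apply, and_true, true_and]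
      split_ifs <;> first | ring1 | (exfalso; omega)
    · simp

lemma Zf_pow_apply {n : ℕ} (hn : 0 < n) (f : ℝ) (m : ℕ) (hm : m < n) (i k : Fin n) :
    ((Zf n f) ^ m) i k =
      if (k : ℕ) + m = (i : ℕ) then 1
      else if (i : ℕ) + n = (k : ℕ) + m then (f : ℂ)
      else 0 := by
  induction m generalizing i with
  | zero =>
    have hk := k.isLt
    have hi := i.isLt
    simp only [pow_zero, Matrix.one_apply, Fin.ext_iff]
    split_ifs <;> first | ring1 | (exfalso; omega)
  | succ m ih =>
    have hm' : m < n := by omega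
    have hk := k.isLt
    have hi := i.isLt
    rw [pow_succ', Zf_mul_apply hn]
    by_cases h : (i : ℕ) = 0
    · rw [if_pos h, ih hm']
      simp only [show ((⟨n-1, by omega⟩ : Fin n) : ℕ) = n - 1 from rfl]
      split_ifs <;> first | ring1 | (exfalso; omega)
    · rw [if_neg h, ih hm']
      simp only [show ((⟨(i:ℕ)-1, by omega⟩ : Fin n) : ℕ) = (i:ℕ) - 1 from rfl]
      split_ifs <;> first | ring1 | (exfalso; omega)

lemma Zf_pow_n {n : ℕ} (hn : 0 < n) (f : ℝ) :
    (Zf n f) ^ n = (f : ℂ) • (1 : Matrix (Fin n) (Fin n) ℂ) := by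
  obtain ⟨m, rfl⟩ : ∃ m, n = m + 1 := ⟨n - 1, by omega⟩
  ext i k
  rw [pow_succ', Zf_mul_apply hn, Matrix.smul_apply, Matrix.one_apply]
  have hk := k.isLt
  have hi := i.isLt
  by_cases h : (i : ℕ) = 0
  · rw [if_pos h, Zf_pow_apply hn f m (by omega)]
    simp only [show ((⟨m+1-1, by omega⟩ : Fin (m+1)) : ℕ) = m from rfl, Fin.ext_iff,
      smul_eq_mul]
    split_ifs <;> first | ring1 | (exfalso; omega)
  · rw [if_neg h, Zf_pow_apply hn f m (by omega)]
    simp only [show ((⟨(i:ℕ)-1, by omega⟩ : Fin (m+1)) : ℕ) = (i:ℕ) - 1 from rfl,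
      Fin.ext_iff, smul_eq_mul]
    split_ifs <;> first | ring1 | (exfalso; omega)

lemma ZfVec_eq_sum {n : ℕ} (hn : 0 < n) (f : ℝ) (v : Fin n → ℂ) :
    ZfVec n f v = ∑ m : Fin n, v m • (Zf n f) ^ (m : ℕ) := by
  ext i k
  have hk := k.isLt
  have hi := i.isLt
  have hrw : ∀ m : Fin n, ((Zf n f) ^ (m : ℕ)) i k =
      if (k : ℕ) + (m : ℕ) = (i : ℕ) then 1
      else if (i : ℕ) + n = (k : ℕ) + (m : ℕ) then (f : ℂ) else 0 :=
    fun m => Zf_pow_apply hn f m m.isLt i k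
  rw [Matrix.sum_apply]
  simp only [Matrix.smul_apply, hrw]
  have ha1 : ((i : ℕ) + n - (k : ℕ)) % n < n := Nat.mod_lt _ hn
  have ha2 : (k : ℕ) + ((i : ℕ) + n - (k : ℕ)) % n = (i : ℕ) ∨
      (k : ℕ) + ((i : ℕ) + n - (k : ℕ)) % n = (i : ℕ) + n := by
    by_cases hle : (k : ℕ) ≤ (i : ℕ)
    · left
      have h1 : (i : ℕ) + n - (k : ℕ) = ((i : ℕ) - (k : ℕ)) + n := by omega
      rw [h1, Nat.add_mod_right, Nat.mod_eq_of_lt (by omega)]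
      omega
    · right
      rw [Nat.mod_eq_of_lt (by omega)]
      omega
  rw [Finset.sum_eq_single (⟨((i : ℕ) + n - (k : ℕ)) % n, ha1⟩ : Fin n)]
  · have hv : v (⟨((i : ℕ) + n - (k : ℕ)) % n, Nat.mod_lt _ i.pos⟩ : Fin n) =
        v (⟨((i : ℕ) + n - (k : ℕ)) % n, ha1⟩ : Fin n) := rfl
    simp only [ZfVec, Matrix.of_apply, hv,
      show ((⟨((i : ℕ) + n - (k : ℕ)) % n, ha1⟩ : Fin n) : ℕ) =
        ((i : ℕ) + n - (k : ℕ)) % n from rfl]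
    by_cases hle : (k : ℕ) ≤ (i : ℕ)
    · rw [if_pos hle, if_pos (by omega), smul_eq_mul]
      ring1
    · rw [if_neg hle, if_neg (by omega), if_pos (by omega), smul_eq_mul]
      ring1
  · intro m _ hm
    have hm' : (m : ℕ) ≠ ((i : ℕ) + n - (k : ℕ)) % n := fun hc => hm (Fin.ext hc)
    have hmlt := m.isLt
    rw [if_neg (by omega), if_neg (by omega), smul_zero]
  · simp

lemma Zf_comm {n : ℕ} (hn : 0 < n) (f : ℝ) (v : Fin n → ℂ) :
    Zf n f * ZfVec n f v = ZfVec n f v * Zf n f := by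
  rw [ZfVec_eq_sum hn, Finset.mul_sum, Finset.sum_mul]
  refine Finset.sum_congr rfl fun m _ => ?_
  rw [mul_smul_comm, smul_mul_assoc, ← pow_succ', ← pow_succ]

noncomputable def Ecorner (n : ℕ) : Matrix (Fin n) (Fin n) ℂ :=
  Matrix.of fun i k => if (i : ℕ) = 0 ∧ (k : ℕ) = n - 1 then 1 else 0

lemma Zf_sub_Zf {n : ℕ} (e f : ℝ) :
    Zf n e - Zf n f = ((e : ℂ) - (f : ℂ)) • Ecorner n := by
  ext i k
  simp only [Matrix.sub_apply, Zf, Ecorner, Matrix.of_apply, Matrix.smul_apply, smul_eq_mul]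
  split_ifs <;> first | ring1 | (exfalso; omega)

lemma Jrev_mulVec {n : ℕ} (hn : 0 < n) (h : Fin n → ℂ) (m : Fin n) :
    (Jrev n).mulVec h m = h ⟨n - 1 - (m : ℕ), by omega⟩ := by
  have hm := m.isLt
  simp only [Matrix.mulVec, dotProduct]
  rw [Finset.sum_eq_single (⟨n - 1 - (m : ℕ), by omega⟩ : Fin n)]
  · simp only [Jrev, Matrix.of_apply,
      show ((⟨n - 1 - (m : ℕ), by omega⟩ : Fin n) : ℕ) = n - 1 - (m : ℕ) from rfl]
    rw [if_pos (by omega), one_mul]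
  · intro j _ hj
    have hj' : (j : ℕ) ≠ n - 1 - (m : ℕ) := fun hc => hj (Fin.ext hc)
    have hjl := j.isLt
    simp only [Jrev, Matrix.of_apply]
    rw [if_neg (by omega), zero_mul]
  · simp

lemma corner_mul {n : ℕ} (hn : 0 < n) (f : ℝ) (h : Fin n → ℂ) :
    Ecorner n * ZfVec n f ((Jrev n).mulVec h)
      = Matrix.of fun (i k : Fin n) => if (i : ℕ) = 0 then h k else 0 := by
  ext i k
  have hk := k.isLt
  rw [Matrix.mul_apply]
  rw [Finset.sum_eq_single (⟨n - 1, by omega⟩ : Fin n)]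
  · simp only [Ecorner, ZfVec, Matrix.of_apply, and_true, true_and,
      show ((⟨n - 1, by omega⟩ : Fin n) : ℕ) = n - 1 from rfl]
    have e1 : (n - 1 + n - (k : ℕ)) % n = n - 1 - (k : ℕ) := by
      have h1 : n - 1 + n - (k : ℕ) = (n - 1 - (k : ℕ)) + n := by omega
      rw [h1, Nat.add_mod_right, Nat.mod_eq_of_lt (by omega)]
    have e2 : (⟨(n - 1 + n - (k : ℕ)) % n, Nat.mod_lt _ (by omega : (0:ℕ) < n)⟩ : Fin n)
        = (⟨n - 1 - (k : ℕ), by omega⟩ : Fin n) := Fin.ext (by simpa using e1)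
    rw [show ((Jrev n).mulVec h ⟨(n - 1 + n - (k : ℕ)) % n, Nat.mod_lt _ (by omega : (0:ℕ) < n)⟩)
        = (Jrev n).mulVec h ⟨n - 1 - (k : ℕ), by omega⟩ from congrArg _ e2]
    rw [Jrev_mulVec hn]
    have e3 : (⟨n - 1 - (n - 1 - (k : ℕ)), by omega⟩ : Fin n) = k :=
      Fin.ext (show n - 1 - (n - 1 - (k : ℕ)) = (k : ℕ) by omega)
    rw [e3]
    split_ifs <;> first | ring1 | (exfalso; omega)
  · intro j _ hj
    have hj' : (j : ℕ) ≠ n - 1 := fun hc => hj (Fin.ext hc)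
    simp only [Ecorner, Matrix.of_apply]
    rw [if_neg (by omega), zero_mul]
  · simp

lemma mul_Pform {n : ℕ} (hn : 0 < n) (e : ℝ) (g h : Fin n → ℂ) :
    ZfVec n e g * (Matrix.of fun (i k : Fin n) => if (i : ℕ) = 0 then h k else 0)
      = Matrix.of fun (i k : Fin n) => g i * h k := by
  ext i k
  have hi := i.isLt
  rw [Matrix.mul_apply]
  rw [Finset.sum_eq_single (⟨0, hn⟩ : Fin n)]
  · simp only [ZfVec, Matrix.of_apply, show ((⟨0, hn⟩ : Fin n) : ℕ) = 0 from rfl]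
    rw [if_pos (Nat.zero_le _)]
    have e1 : (⟨((i : ℕ) + n - 0) % n, Nat.mod_lt _ i.pos⟩ : Fin n) = i := by
      refine Fin.ext ?_
      simp only [Nat.sub_zero]
      rw [Nat.add_mod_right, Nat.mod_eq_of_lt hi]
    rw [if_pos trivial, e1, one_mul]
  · intro j _ hj
    have hj' : (j : ℕ) ≠ 0 := fun hc => hj (Fin.ext hc)
    rw [Matrix.of_apply, if_neg hj', mul_zero]
  · simp

lemma displacement_injective {n : ℕ} (hn : 0 < n) (e f : ℝ) (hef : (e : ℂ) ≠ (f : ℂ))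
    (Y : Matrix (Fin n) (Fin n) ℂ) (h : Zf n e * Y = Y * Zf n f) : Y = 0 := by
  have hp : ∀ m : ℕ, (Zf n e) ^ m * Y = Y * (Zf n f) ^ m := by
    intro m
    induction m with
    | zero => simp
    | succ m ih =>
      rw [pow_succ', mul_assoc, ih, ← mul_assoc, h, mul_assoc, ← pow_succ']
  have hn' := hp n
  rw [Zf_pow_n hn e, Zf_pow_n hn f, smul_mul_assoc, mul_smul_comm, one_mul, mul_one] at hn'
  have hz : ((e : ℂ) - (f : ℂ)) • Y = 0 := by rw [sub_smul, hn', sub_self]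
  rcases smul_eq_zero.mp hz with h1 | h1
  · exact absurd (sub_eq_zero.mp h1) hef
  · exact h1

/-- Sylvester-type displacement inversion: if ∇_{Z_e,Z_f}[M] = G·Hᵀ with e ≠ f and e ≠ 0,
then M = (1/(e − f)) · Σ_{j=1}^{r} Z_e(g_j) · Z_f(J·h_j). -/
theorem sylvester_rank_decomposition (n r : ℕ) (M : Matrix (Fin n) (Fin n) ℂ) (e f : ℝ)
    (hef : e ≠ f) (he : e ≠ 0) (G H : Matrix (Fin n) (Fin r) ℂ)
    (hM : Zf n e * M - M * Zf n f = G * Hᵀ) :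
    M = (1 / ((e : ℂ) - (f : ℂ))) •
      ∑ j : Fin r,
        ZfVec n e (fun i => G i j) * ZfVec n f ((Jrev n).mulVec fun i => H i j) := by
  rcases Nat.eq_zero_or_pos n with h0 | hn
  · subst h0
    apply Matrix.ext
    intro i
    exact i.elim0
  have hef' : (e : ℂ) ≠ (f : ℂ) := fun hh => hef (by exact_mod_cast hh)
  set c : ℂ := (e : ℂ) - (f : ℂ) with hc
  have hc0 : c ≠ 0 := sub_ne_zero.mpr hef'
  set S := ∑ j : Fin r,
      ZfVec n e (fun i => G i j) * ZfVec n f ((Jrev n).mulVec fun i => H i j) with hSdef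
  have key : Zf n e * S - S * Zf n f = c • (G * Hᵀ) := by
    rw [hSdef, Finset.mul_sum, Finset.sum_mul, ← Finset.sum_sub_distrib]
    have hterm : ∀ j : Fin r,
        Zf n e * (ZfVec n e (fun i => G i j) * ZfVec n f ((Jrev n).mulVec fun i => H i j))
          - ZfVec n e (fun i => G i j) * ZfVec n f ((Jrev n).mulVec fun i => H i j) * Zf n f
        = c • Matrix.of (fun (i k : Fin n) => G i j * H k j) := by
      intro j
      set A := ZfVec n e (fun i => G i j) with hA
      set B := ZfVec n f ((Jrev n).mulVec fun i => H i j) with hB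
      have cA : Zf n e * A = A * Zf n e := Zf_comm hn e _
      have cB : Zf n f * B = B * Zf n f := Zf_comm hn f _
      calc Zf n e * (A * B) - A * B * Zf n f
          = A * (Zf n e * B) - A * (B * Zf n f) := by
            rw [← mul_assoc, cA, mul_assoc, mul_assoc]
        _ = A * (Zf n e * B - Zf n f * B) := by rw [cB, Matrix.mul_sub]
        _ = A * ((Zf n e - Zf n f) * B) := by rw [Matrix.sub_mul]
        _ = A * ((c • Ecorner n) * B) := by rw [Zf_sub_Zf e f]
        _ = c • (A * (Ecorner n * B)) := by
            rw [smul_mul_assoc, mul_smul_comm]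
        _ = c • (A * Matrix.of fun (i k : Fin n) => if (i : ℕ) = 0 then H k j else 0) := by
            rw [hB, corner_mul hn f]
        _ = c • Matrix.of (fun (i k : Fin n) => G i j * H k j) := by
            rw [hA, mul_Pform hn e]
    rw [Finset.sum_congr rfl fun j _ => hterm j, ← Finset.smul_sum]
    congr 1
    apply Matrix.ext
    intro i k
    rw [Matrix.sum_apply, Matrix.mul_apply]
    simp [Matrix.transpose_apply]
  have hX : Zf n e * ((1 / c) • S) - ((1 / c) • S) * Zf n f = G * Hᵀ := by
    rw [mul_smul_comm, smul_mul_assoc, ← smul_sub, key, smul_smul, one_div,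
      inv_mul_cancel₀ hc0, one_smul]
  have h3 : Zf n e * M - M * Zf n f
      = Zf n e * ((1 / c) • S) - ((1 / c) • S) * Zf n f := by rw [hM, hX]
  have h4 : Zf n e * M - Zf n e * ((1 / c) • S)
      = M * Zf n f - ((1 / c) • S) * Zf n f := sub_eq_sub_iff_sub_eq_sub.mp h3
  have hY : Zf n e * (M - (1 / c) • S) = (M - (1 / c) • S) * Zf n f := by
    rw [Matrix.mul_sub, Matrix.sub_mul, h4]
  have hY0 : M - (1 / c) • S = 0 := displacement_injective hn e f hef' _ hY
  have : M = (1 / c) • S := by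
    have := sub_eq_zero.mp hY0
    exact this
  exact this
end
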